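/- arXiv:1812.08604 — 6 statements merged into one kernel-verified Lean document; each statement's English description precedes it below -/
import Mathlib

section
/- In the setting of the Galois connection δ ⊣ ε with ε ∘ δ = id between a complete ortholattice L and a complete lattice D, the paraconsistent negation satisfies excluded middle: S ∨ S* = ⊤ for every S ∈ D. -/
/-- Excluded middle for the paraconsistent negation: `S ⊔ S* = ⊤`, where
`S* := δ(ε(S)ᗮ)`. -/
theorem stmt8 {L D : Type*} [CompleteLattice L] [CompleteLattice D]
    (compl : L → L)
    (h_inv : ∀ a, compl (compl a) = a)
    (h_anti : ∀ a b : L, a ≤ b → compl b ≤ compl a)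
    (h_nc : ∀ a : L, a ⊓ compl a = ⊥)
    (h_em : ∀ a : L, a ⊔ compl a = ⊤)
    (δ : L → D) (ε : D → L)
    (hgc : ∀ a S, δ a ≤ S ↔ a ≤ ε S)
    (hεδ : ∀ a, ε (δ a) = a)
    (hδsup : ∀ a b : L, δ (a ⊔ b) = δ a ⊔ δ b)
    (hδtop : δ ⊤ = ⊤) (hδbot : δ ⊥ = ⊥)
    (S : D) :
    S ⊔ δ (compl (ε S)) = ⊤ := by
  have h1 : δ (ε S) ≤ S := (hgc _ _).mpr le_rfl
  have h2 : (⊤ : D) = δ (ε S) ⊔ δ (compl (ε S)) := by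
    rw [← hδsup, h_em, hδtop]
  exact top_le_iff.mp (h2 ▸ sup_le_sup_right h1 _)
end

section
/- In the setting of the Galois connection δ ⊣ ε with ε ∘ δ = id, the operation S ⇒_S T := S* ∨ (S* ∨ T*)* on D mirrors the Sasaki conditional: δ(a →_S b) = δ(a) ⇒_S δ(b) for all a, b in L. -/
/-- The operation `S ⇒_S T := S* ⊔ (S* ⊔ T*)*` mirrors the Sasaki conditional:
`δ(a →_S b) = δ(a) ⇒_S δ(b)`, where `S* := δ(ε(S)ᗮ)` and `a →_S b := aᗮ ⊔ (a ⊓ b)`. -/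
theorem stmt11 {L D : Type*} [CompleteLattice L] [CompleteLattice D]
    (compl : L → L)
    (h_inv : ∀ a, compl (compl a) = a)
    (h_anti : ∀ a b : L, a ≤ b → compl b ≤ compl a)
    (h_nc : ∀ a : L, a ⊓ compl a = ⊥)
    (h_em : ∀ a : L, a ⊔ compl a = ⊤)
    (h_om : ∀ a b : L, a ≤ b → b = a ⊔ (b ⊓ compl a))
    (h_dm : ∀ a b : L, compl (a ⊓ b) = compl a ⊔ compl b)
    (δ : L → D) (ε : D → L)
    (hgc : ∀ a S, δ a ≤ S ↔ a ≤ ε S)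
    (hεδ : ∀ a, ε (δ a) = a)
    (hδsup : ∀ a b : L, δ (a ⊔ b) = δ a ⊔ δ b)
    (star : D → D)
    (hstar : ∀ S, star S = δ (compl (ε S)))
    (a b : L) :
    δ (compl a ⊔ (a ⊓ b)) = star (δ a) ⊔ star (star (δ a) ⊔ star (δ b)) := by
  simp only [hstar, hεδ, ← hδsup, hεδ, ← h_dm, h_inv]
end

section
/- In the setting of the Galois connection δ ⊣ ε with ε ∘ δ = id, ε(S ⇒_S T) = ε(S) →_S ε(T) for all S, T ∈ D, where ⇒_S is defined by S ⇒_S T := S* ∨ (S* ∨ T*)*. -/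
/-- `ε(S ⇒_S T) = ε(S) →_S ε(T)`, where `S ⇒_S T := S* ⊔ (S* ⊔ T*)*`,
`S* := δ(ε(S)ᗮ)` and `a →_S b := aᗮ ⊔ (a ⊓ b)`. -/
theorem stmt12 {L D : Type*} [CompleteLattice L] [CompleteLattice D]
    (compl : L → L)
    (h_inv : ∀ a, compl (compl a) = a)
    (h_anti : ∀ a b : L, a ≤ b → compl b ≤ compl a)
    (h_nc : ∀ a : L, a ⊓ compl a = ⊥)
    (h_em : ∀ a : L, a ⊔ compl a = ⊤)
    (h_om : ∀ a b : L, a ≤ b → b = a ⊔ (b ⊓ compl a))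
    (h_dm : ∀ a b : L, compl (a ⊓ b) = compl a ⊔ compl b)
    (δ : L → D) (ε : D → L)
    (hgc : ∀ a S, δ a ≤ S ↔ a ≤ ε S)
    (hεδ : ∀ a, ε (δ a) = a)
    (hδsup : ∀ a b : L, δ (a ⊔ b) = δ a ⊔ δ b)
    (hεinf : ∀ S T : D, ε (S ⊓ T) = ε S ⊓ ε T)
    (star : D → D)
    (hstar : ∀ S, star S = δ (compl (ε S)))
    (S T : D) :
    ε (star S ⊔ star (star S ⊔ star T)) = compl (ε S) ⊔ (ε S ⊓ ε T) := by
  have h1 : star S ⊔ star T = δ (compl (ε S) ⊔ compl (ε T)) := by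
    rw [hstar, hstar, hδsup]
  have h2 : star (star S ⊔ star T) = δ (ε S ⊓ ε T) := by
    rw [hstar, h1, hεδ, ← h_dm, h_inv]
  rw [h2, hstar S, ← hδsup, hεδ]
end

section
/- In the setting of the Galois connection δ ⊣ ε with ε ∘ δ = id, S commutes with T if and only if S** = (S* ∨ (T* ∧ T**))*, where commutation means ε(S) = (ε(S) ∧ ε(T)) ∨ (ε(S) ∧ ε(T)ᗮ). -/
/-- `S` commutes with `T` (i.e. `ε(S) = (ε(S) ⊓ ε(T)) ⊔ (ε(S) ⊓ ε(T)ᗮ)`) iff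
`S** = (S* ⊔ (T* ⊓ T**))*`, where `S* := δ(ε(S)ᗮ)`. -/
theorem stmt16 {L D : Type*} [CompleteLattice L] [CompleteLattice D]
    (compl : L → L)
    (h_inv : ∀ a, compl (compl a) = a)
    (h_anti : ∀ a b : L, a ≤ b → compl b ≤ compl a)
    (h_nc : ∀ a : L, a ⊓ compl a = ⊥)
    (h_em : ∀ a : L, a ⊔ compl a = ⊤)
    (h_om : ∀ a b : L, a ≤ b → b = a ⊔ (b ⊓ compl a))
    (h_dm : ∀ a b : L, compl (a ⊓ b) = compl a ⊔ compl b)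
    (hdistr : ∀ x y z : D, x ⊓ (y ⊔ z) = (x ⊓ y) ⊔ (x ⊓ z))
    (δ : L → D) (ε : D → L)
    (hgc : ∀ a S, δ a ≤ S ↔ a ≤ ε S)
    (hεδ : ∀ a, ε (δ a) = a)
    (hδinj : Function.Injective δ)
    (hδsup : ∀ a b : L, δ (a ⊔ b) = δ a ⊔ δ b)
    (hεinf : ∀ S T : D, ε (S ⊓ T) = ε S ⊓ ε T)
    (star : D → D)
    (hstar : ∀ S, star S = δ (compl (ε S)))
    (S T : D) :
    (ε S = (ε S ⊓ ε T) ⊔ (ε S ⊓ compl (ε T))) ↔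
      star (star S) = star (star S ⊔ (star T ⊓ star (star T))) := by
  set a := ε S with ha
  set b := ε T with hb
  -- compl is injective
  have hcinj : Function.Injective compl := fun x y h => by
    have := congrArg compl h; rwa [h_inv, h_inv] at this
  -- dual De Morgan
  have dm_sup : ∀ x y : L, compl (x ⊔ y) = compl x ⊓ compl y := by
    intro x y
    have : x ⊔ y = compl (compl x ⊓ compl y) := by
      rw [h_dm, h_inv, h_inv]
    rw [this, h_inv]
  -- dual distributivity in D
  have hsupd : ∀ x y z : D, x ⊔ (y ⊓ z) = (x ⊔ y) ⊓ (x ⊔ z) := by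
    intro x y z
    apply le_antisymm
    · exact sup_le (le_inf le_sup_left le_sup_left)
        (le_inf (le_trans inf_le_left le_sup_right)
          (le_trans inf_le_right le_sup_right))
    · rw [hdistr]
      apply sup_le
      · exact le_trans inf_le_right le_sup_left
      · rw [inf_comm (x ⊔ y) z, hdistr]
        exact sup_le (le_trans inf_le_right le_sup_left)
          (le_sup_of_le_right (by rw [inf_comm]))
  -- compute the stars
  have e1 : star (star S) = δ a := by
    rw [hstar, hstar, hεδ, h_inv]
  have e2 : star (star T) = δ b := by
    rw [hstar, hstar, hεδ, h_inv]
  have e3 : star S ⊔ (star T ⊓ star (star T))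
      = δ (compl a ⊔ compl b) ⊓ δ (compl a ⊔ b) := by
    rw [e2, hstar S, hstar T, ← ha, ← hb, hsupd, ← hδsup, ← hδsup]
  have e4 : star (star S ⊔ (star T ⊓ star (star T)))
      = δ (compl ((compl a ⊔ compl b) ⊓ (compl a ⊔ b))) := by
    rw [hstar, e3, hεinf, hεδ, hεδ]
  rw [e1, e4]
  have key : compl ((compl a ⊔ compl b) ⊓ (compl a ⊔ b)) = (a ⊓ b) ⊔ (a ⊓ compl b) := by
    rw [h_dm, dm_sup, dm_sup]; simp only [h_inv]
  constructor
  · intro h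
    exact congrArg δ (h.trans key.symm)
  · intro h
    exact (hδinj h).trans key
end

section
/- Assume L is a complete orthomodular lattice in which an element a commutes with every element only if a ∈ {⊥, ⊤} (e.g. L is an irreducible projection lattice P(H) with dim H ≥ 2). Then for all a ∈ L, δ(a) ∧ δ(a)* = ⊥ in D if and only if a = ⊤ or a = ⊥. -/
/-- If the center of `L` is `{⊥, ⊤}`, then `δ(a) ⊓ δ(a)* = ⊥` iff `a = ⊤ ∨ a = ⊥`. -/
theorem stmt17 {L D : Type*} [CompleteLattice L] [CompleteLattice D]
    (compl : L → L)
    (h_inv : ∀ a, compl (compl a) = a)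
    (h_anti : ∀ a b : L, a ≤ b → compl b ≤ compl a)
    (h_nc : ∀ a : L, a ⊓ compl a = ⊥)
    (h_em : ∀ a : L, a ⊔ compl a = ⊤)
    (h_om : ∀ a b : L, a ≤ b → b = a ⊔ (b ⊓ compl a))
    (hcenter : ∀ a : L, (∀ x : L, a = (a ⊓ x) ⊔ (a ⊓ compl x)) → a = ⊥ ∨ a = ⊤)
    (hdistr : ∀ x y z : D, x ⊓ (y ⊔ z) = (x ⊓ y) ⊔ (x ⊓ z))
    (δ : L → D) (ε : D → L)
    (hgc : ∀ a S, δ a ≤ S ↔ a ≤ ε S)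
    (hεδ : ∀ a, ε (δ a) = a)
    (hδinj : Function.Injective δ)
    (hεinf : ∀ S T : D, ε (S ⊓ T) = ε S ⊓ ε T)
    (star : D → D)
    (hstar : ∀ S, star S = δ (compl (ε S)))
    (a : L) :
    δ a ⊓ star (δ a) = ⊥ ↔ a = ⊤ ∨ a = ⊥ := by
  have hδ_mono : ∀ u v : L, u ≤ v → δ u ≤ δ v := fun u v h =>
    (hgc u (δ v)).2 (h.trans (hεδ v).ge)
  have hδε : ∀ S : D, δ (ε S) ≤ S := fun S => (hgc (ε S) S).2 le_rfl
  have hε_mono : ∀ S T : D, S ≤ T → ε S ≤ ε T := fun S T h =>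
    (hgc (ε S) T).1 ((hδε S).trans h)
  have hδbot : δ ⊥ = ⊥ := le_bot_iff.mp ((hgc ⊥ ⊥).2 bot_le)
  have hjoin : ∀ u v : L, δ (u ⊔ v) = δ u ⊔ δ v := by
    intro u v
    apply le_antisymm
    · exact (hgc _ _).2 (sup_le ((hgc u _).1 le_sup_left) ((hgc v _).1 le_sup_right))
    · exact sup_le (hδ_mono _ _ le_sup_left) (hδ_mono _ _ le_sup_right)
  have dm : ∀ u v : L, compl (u ⊓ v) ≤ compl u ⊔ compl v := by
    intro u v
    have h1 : compl (compl u ⊔ compl v) ≤ u ⊓ v := by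
      apply le_inf
      · have := h_anti (compl u) (compl u ⊔ compl v) le_sup_left
        rwa [h_inv] at this
      · have := h_anti (compl v) (compl u ⊔ compl v) le_sup_right
        rwa [h_inv] at this
    have := h_anti _ _ h1
    rwa [h_inv] at this
  have hsa : star (δ a) = δ (compl a) := by rw [hstar, hεδ]
  rw [hsa]
  constructor
  · intro H
    have key : ∀ x : L, a = (a ⊓ x) ⊔ (a ⊓ compl x) := by
      intro x
      -- the commutator of a and x
      set c : L := (a ⊔ x) ⊓ ((a ⊔ compl x) ⊓ ((compl a ⊔ x) ⊓ (compl a ⊔ compl x))) with hc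
      have step : ∀ Y : D, (δ a ⊔ Y) ⊓ (δ (compl a) ⊔ Y) ≤ Y := by
        intro Y
        rw [hdistr]
        apply sup_le
        · rw [inf_comm, hdistr]
          apply sup_le
          · rw [inf_comm, H]; exact bot_le
          · exact inf_le_right
        · exact inf_le_right
      have hδc : ∀ y : L, δ ((a ⊔ y) ⊓ ((compl a ⊔ y))) ≤ δ y := by
        intro y
        calc δ ((a ⊔ y) ⊓ (compl a ⊔ y))
            ≤ (δ a ⊔ δ y) ⊓ (δ (compl a) ⊔ δ y) := by
              refine le_inf ?_ ?_
              · rw [← hjoin]; exact hδ_mono _ _ inf_le_left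
              · rw [← hjoin]; exact hδ_mono _ _ inf_le_right
          _ ≤ δ y := step _
      have h1 : δ c ≤ δ x := by
        refine le_trans ?_ (hδc x)
        apply hδ_mono
        exact le_inf inf_le_left (inf_le_right.trans (inf_le_right.trans inf_le_left))
      have h2 : δ c ≤ δ (compl x) := by
        refine le_trans ?_ (hδc (compl x))
        apply hδ_mono
        exact le_inf (inf_le_right.trans inf_le_left)
          (inf_le_right.trans (inf_le_right.trans inf_le_right))
      have hcbot : c = ⊥ := by
        apply le_bot_iff.mp
        calc c = ε (δ c) := (hεδ c).symm
          _ ≤ ε (δ x ⊓ δ (compl x)) := hε_mono _ _ (le_inf h1 h2)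
          _ = x ⊓ compl x := by rw [hεinf, hεδ, hεδ]
          _ = ⊥ := h_nc x
      -- orthomodularity finishes it
      have hp : (a ⊓ x) ⊔ (a ⊓ compl x) ≤ a := sup_le inf_le_left inf_le_left
      have hom := h_om _ a hp
      have hq : a ⊓ compl ((a ⊓ x) ⊔ (a ⊓ compl x)) ≤ c := by
        refine le_inf ?_ (le_inf ?_ (le_inf ?_ ?_))
        · exact inf_le_left.trans le_sup_left
        · exact inf_le_left.trans le_sup_left
        · refine inf_le_right.trans ?_
          refine (h_anti _ _ (le_sup_right :
            a ⊓ compl x ≤ (a ⊓ x) ⊔ (a ⊓ compl x))).trans ?_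
          refine (dm a (compl x)).trans ?_
          rw [h_inv]
        · refine inf_le_right.trans ?_
          refine (h_anti _ _ (le_sup_left :
            a ⊓ x ≤ (a ⊓ x) ⊔ (a ⊓ compl x))).trans ?_
          exact dm a x
      have hqbot : a ⊓ compl ((a ⊓ x) ⊔ (a ⊓ compl x)) = ⊥ :=
        le_bot_iff.mp (hq.trans hcbot.le)
      exact hom.trans (by rw [hqbot, sup_bot_eq])
    exact (hcenter a key).symm
  · rintro (rfl | rfl)
    · have hc : compl (⊤ : L) = ⊥ := by
        have := h_nc (⊤ : L); rwa [top_inf_eq] at this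
      rw [hc, hδbot, inf_bot_eq]
    · rw [hδbot, bot_inf_eq]
end

section
/- Under the same hypotheses (center of L is {⊥,⊤}), the negation * on D is properly paraconsistent: for any S ∈ D, S ∧ S* = ⊥ if and only if S = ⊤ or S = ⊥. -/
section Aux

variable {L : Type*} [CompleteLattice L] (compl : L → L)

lemma myDeMorgan (h_inv : ∀ a, compl (compl a) = a)
    (h_anti : ∀ a b : L, a ≤ b → compl b ≤ compl a)
    (s t : L) : compl (s ⊔ t) = compl s ⊓ compl t := by
  apply le_antisymm
  · exact le_inf (h_anti _ _ le_sup_left) (h_anti _ _ le_sup_right)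
  · have h1 : s ≤ compl (compl s ⊓ compl t) := by
      have := h_anti _ _ (inf_le_left : compl s ⊓ compl t ≤ compl s)
      rwa [h_inv] at this
    have h2 : t ≤ compl (compl s ⊓ compl t) := by
      have := h_anti _ _ (inf_le_right : compl s ⊓ compl t ≤ compl t)
      rwa [h_inv] at this
    have := h_anti _ _ (sup_le h1 h2)
    rwa [h_inv] at this

/-- Symmetry of commutativity in an orthomodular lattice. -/
lemma commSym (h_inv : ∀ a, compl (compl a) = a)
    (h_anti : ∀ a b : L, a ≤ b → compl b ≤ compl a)
    (h_om : ∀ a b : L, a ≤ b → b = a ⊔ (b ⊓ compl a))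
    (p q : L) (H : p = (p ⊓ q) ⊔ (p ⊓ compl q)) :
    q = (q ⊓ p) ⊔ (q ⊓ compl p) := by
  have step := h_om (p ⊓ q) q inf_le_right
  have hr : q ⊓ compl (p ⊓ q) = q ⊓ compl p := by
    apply le_antisymm
    · apply le_inf inf_le_left
      have hq1 : q ⊓ compl (p ⊓ q) ≤ compl (p ⊓ q) := inf_le_right
      have hq2 : q ⊓ compl (p ⊓ q) ≤ compl (p ⊓ compl q) := by
        refine le_trans inf_le_left ?_
        have h1 := h_anti _ _ (inf_le_right : p ⊓ compl q ≤ compl q)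
        rwa [h_inv] at h1
      have hle := le_inf hq1 hq2
      rwa [← myDeMorgan compl h_inv h_anti, ← H] at hle
    · exact le_inf inf_le_left (le_trans inf_le_right (h_anti _ _ inf_le_left))
  rw [hr] at step
  rw [inf_comm p q] at step
  exact step

end Aux

/-- Properly paraconsistent negation: for any `S`, `S ⊓ S* = ⊥` iff `S = ⊤ ∨ S = ⊥`,
under the hypothesis that the center of `L` is `{⊥, ⊤}`. -/
theorem stmt18 {L D : Type*} [CompleteLattice L] [CompleteLattice D]
    (compl : L → L)
    (h_inv : ∀ a, compl (compl a) = a)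
    (h_anti : ∀ a b : L, a ≤ b → compl b ≤ compl a)
    (h_nc : ∀ a : L, a ⊓ compl a = ⊥)
    (h_em : ∀ a : L, a ⊔ compl a = ⊤)
    (h_om : ∀ a b : L, a ≤ b → b = a ⊔ (b ⊓ compl a))
    (hcenter : ∀ a : L, (∀ x : L, a = (a ⊓ x) ⊔ (a ⊓ compl x)) → a = ⊥ ∨ a = ⊤)
    (hdistr : ∀ x y z : D, x ⊓ (y ⊔ z) = (x ⊓ y) ⊔ (x ⊓ z))
    (δ : L → D) (ε : D → L)
    (hgc : ∀ a S, δ a ≤ S ↔ a ≤ ε S)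
    (hεδ : ∀ a, ε (δ a) = a)
    (hδinj : Function.Injective δ)
    (hεinf : ∀ S T : D, ε (S ⊓ T) = ε S ⊓ ε T)
    (hδtop : δ ⊤ = ⊤) (hδbot : δ ⊥ = ⊥)
    (star : D → D)
    (hstar : ∀ S, star S = δ (compl (ε S)))
    (S : D) :
    S ⊓ star S = ⊥ ↔ S = ⊤ ∨ S = ⊥ := by
  have hδmono : ∀ x y : L, x ≤ y → δ x ≤ δ y := by
    intro x y hxy
    exact (hgc x (δ y)).mpr (by rw [hεδ]; exact hxy)
  have δsup : ∀ x y : L, δ (x ⊔ y) = δ x ⊔ δ y := by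
    intro x y
    apply le_antisymm
    · exact (hgc _ _).mpr (sup_le ((hgc _ _).mp le_sup_left) ((hgc _ _).mp le_sup_right))
    · exact sup_le (hδmono _ _ le_sup_left) (hδmono _ _ le_sup_right)
  constructor
  · intro h
    set a := ε S with ha_def
    have hδa_le : δ a ≤ S := (hgc a S).mpr le_rfl
    have hs : S ⊓ δ (compl a) = ⊥ := by
      rw [ha_def, ← hstar]; exact h
    have hAA' : δ a ⊓ δ (compl a) = ⊥ :=
      le_bot_iff.mp ((inf_le_inf_right _ hδa_le).trans hs.le)
    -- key property derived in D
    have P : ∀ b : L, (a ⊔ b) ⊓ compl a = b ⊓ compl a := by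
      intro b
      have hD : δ (a ⊔ b) ⊓ δ (compl a) = δ b ⊓ δ (compl a) := by
        calc δ (a ⊔ b) ⊓ δ (compl a)
            = δ (compl a) ⊓ (δ a ⊔ δ b) := by rw [δsup, inf_comm]
          _ = (δ (compl a) ⊓ δ a) ⊔ (δ (compl a) ⊓ δ b) := hdistr _ _ _
          _ = δ b ⊓ δ (compl a) := by
              rw [inf_comm (δ (compl a)) (δ a), hAA', bot_sup_eq, inf_comm]
      have hE := congrArg ε hD
      rwa [hεinf, hεinf, hεδ, hεδ, hεδ] at hE
    -- every x commutes with a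
    have xform : ∀ x : L, x = (x ⊓ a) ⊔ (x ⊓ compl a) := by
      intro x
      set c := (x ⊓ a) ⊔ (x ⊓ compl a) with hc
      have hcx : c ≤ x := sup_le inf_le_left inf_le_left
      have hom := h_om c x hcx
      set e := x ⊓ compl c with he
      have hea : e ⊓ a = ⊥ := by
        apply le_bot_iff.mp
        have h1 : e ⊓ a ≤ c := le_trans (inf_le_inf_right a inf_le_left) le_sup_left
        have h2 : e ⊓ a ≤ compl c := le_trans inf_le_left inf_le_right
        exact le_trans (le_inf h1 h2) (le_of_eq (h_nc c))
      have hea' : e ⊓ compl a = ⊥ := by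
        apply le_bot_iff.mp
        have h1 : e ⊓ compl a ≤ c :=
          le_trans (inf_le_inf_right (compl a) inf_le_left) le_sup_right
        have h2 : e ⊓ compl a ≤ compl c := le_trans inf_le_left inf_le_right
        exact le_trans (le_inf h1 h2) (le_of_eq (h_nc c))
      have hP := P e
      rw [hea'] at hP
      have hom2 := h_om a (a ⊔ e) le_sup_left
      rw [hP, sup_bot_eq] at hom2
      have hle : e ≤ a := le_trans le_sup_right hom2.le
      have he0 : e = ⊥ := by rw [← hea]; exact (inf_eq_left.mpr hle).symm
      rw [he0, sup_bot_eq] at hom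
      exact hom
    have aform : ∀ x : L, a = (a ⊓ x) ⊔ (a ⊓ compl x) := by
      intro x
      exact commSym compl h_inv h_anti h_om x a (xform x)
    rcases hcenter a aform with ha | ha
    · right
      have hcbot : compl (⊥ : L) = ⊤ := by
        have := h_em (⊥ : L); rwa [bot_sup_eq] at this
      have hstarS : star S = ⊤ := by
        rw [hstar, ← ha_def, ha, hcbot, hδtop]
      calc S = S ⊓ star S := by rw [hstarS, inf_top_eq]
        _ = ⊥ := h
    · left
      apply le_antisymm le_top
      have : δ a = ⊤ := by rw [ha, hδtop]
      rw [← this]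
      exact hδa_le
  · rintro (rfl | rfl)
    · have hεtop : ε (⊤ : D) = ⊤ := by
        apply le_antisymm le_top
        exact (hgc ⊤ ⊤).mp le_top
      have hctop : compl (⊤ : L) = ⊥ := by
        have := h_nc (⊤ : L); rwa [top_inf_eq] at this
      rw [hstar, hεtop, hctop, hδbot, inf_bot_eq]
    · rw [bot_inf_eq]
end
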